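/- If X is a non-degenerate real random variable with everywhere-finite LMGF Λ, E[X] > 0, and Λ(t) → ∞ as t → −∞, then there exists a unique t₀ < 0 with Λ(t₀) = 0. -/

import Mathlib

open MeasureTheory ProbabilityTheory Filter Real

section Aux
set_option linter.unusedSectionVars false
set_option linter.unusedVariables false

variable {Ω : Type*} [MeasurableSpace Ω] {μ : Measure Ω} [IsProbabilityMeasure μ]
  {X : Ω → ℝ}

/-- integrable bound -/
lemma aux_bound_integrable (hX : Measurable X)
    (hint : ∀ t : ℝ, Integrable (fun ω => Real.exp (t * X ω)) μ) (c : ℝ) (hc : 0 ≤ c) :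
    Integrable (fun ω => |X ω| * Real.exp (c * |X ω|)) μ := by
  have hmeas : AEStronglyMeasurable (fun ω => |X ω| * Real.exp (c * |X ω|)) μ :=
    ((hX.abs.mul ((hX.abs.const_mul c).exp)).aestronglyMeasurable)
  refine Integrable.mono ((hint (c+1)).add (hint (-(c+1)))) hmeas ?_
  filter_upwards with ω
  have h1 : |X ω| ≤ Real.exp |X ω| := by
    have := Real.add_one_le_exp |X ω|
    have := abs_nonneg (X ω)
    linarith
  have h2 : |X ω| * Real.exp (c * |X ω|) ≤ Real.exp ((c+1) * |X ω|) := by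
    calc |X ω| * Real.exp (c * |X ω|) ≤ Real.exp |X ω| * Real.exp (c * |X ω|) := by
          exact mul_le_mul_of_nonneg_right h1 (Real.exp_pos _).le
      _ = Real.exp ((c+1) * |X ω|) := by rw [← Real.exp_add]; ring_nf
  have h3 : Real.exp ((c+1) * |X ω|) ≤ Real.exp ((c+1) * X ω) + Real.exp (-(c+1) * X ω) := by
    rcases abs_cases (X ω) with ⟨h, _⟩ | ⟨h, _⟩
    · rw [h]
      have := (Real.exp_pos (-(c+1) * X ω)).le
      linarith
    · rw [h]
      have := (Real.exp_pos ((c+1) * X ω)).le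
      have : Real.exp ((c+1) * -X ω) = Real.exp (-(c+1) * X ω) := by ring_nf
      rw [this]
      have := (Real.exp_pos ((c+1) * X ω)).le
      linarith
  simp only [Pi.add_apply, Real.norm_eq_abs]
  rw [abs_of_nonneg (mul_nonneg (abs_nonneg _) (Real.exp_pos _).le),
      abs_of_nonneg (by positivity : (0:ℝ) ≤ Real.exp ((c+1) * X ω) + Real.exp (-(c+1) * X ω))]
  exact h2.trans h3

lemma aux_hasDerivAt_mgf (hX : Measurable X)
    (hint : ∀ t : ℝ, Integrable (fun ω => Real.exp (t * X ω)) μ) (x₀ : ℝ) :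
    HasDerivAt (fun t => mgf X μ t) (∫ ω, X ω * Real.exp (x₀ * X ω) ∂μ) x₀ := by
  have key := hasDerivAt_integral_of_dominated_loc_of_deriv_le (s := Metric.ball x₀ 1)
    (x₀ := x₀) (F := fun t ω => Real.exp (t * X ω))
    (F' := fun t ω => X ω * Real.exp (t * X ω))
    (bound := fun ω => |X ω| * Real.exp ((|x₀| + 1) * |X ω|))
    (Metric.ball_mem_nhds x₀ one_pos)
    (Eventually.of_forall fun t => (hint t).aestronglyMeasurable)
    (hint x₀)
    ((hX.mul ((hX.const_mul x₀).exp)).aestronglyMeasurable)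
    ?_ (aux_bound_integrable hX hint (|x₀| + 1) (by positivity)) ?_
  · exact key.2
  · filter_upwards with ω t ht
    rw [Real.norm_eq_abs, abs_mul, Real.abs_exp]
    refine mul_le_mul_of_nonneg_left ?_ (abs_nonneg _)
    refine Real.exp_le_exp.2 ?_
    calc t * X ω ≤ |t * X ω| := le_abs_self _
      _ = |t| * |X ω| := abs_mul _ _
      _ ≤ (|x₀| + 1) * |X ω| := by
          refine mul_le_mul_of_nonneg_right ?_ (abs_nonneg _)
          have hd : |t - x₀| < 1 := by
            rw [← Real.dist_eq]; exact Metric.mem_ball.mp ht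
          have := abs_sub_abs_le_abs_sub t x₀
          linarith
  · filter_upwards with ω t _
    have h := (hasDerivAt_mul_const (X ω)).exp (x := t)
    simpa [mul_comm] using h

end Aux

section Aux2

variable {Ω : Type*} [MeasurableSpace Ω] {μ : Measure Ω} [IsProbabilityMeasure μ]
  {X : Ω → ℝ}

lemma aux_no_two_roots (hX : Measurable X)
    (hint : ∀ t : ℝ, Integrable (fun ω => Real.exp (t * X ω)) μ)
    (hnd : ¬ ∃ c : ℝ, X =ᵐ[μ] fun _ => c)
    {a b : ℝ} (hab : a < b) (hb0 : b < 0)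
    (hMa : mgf X μ a = 1) (hMb : mgf X μ b = 1) : False := by
  have ha0 : a < 0 := hab.trans hb0
  set l := b / a with hl
  have hlpos : 0 < l := div_pos_of_neg_of_neg hb0 ha0
  have hllt1 : l < 1 := by
    have h1 : l - 1 = (b - a) / a := by rw [hl, div_sub_one ha0.ne]
    have h2 : (b - a) / a < 0 := div_neg_of_pos_of_neg (by linarith) ha0
    linarith
  have hba : l * a = b := div_mul_cancel₀ b ha0.ne
  set g : Ω → ℝ := fun ω => l * Real.exp (a * X ω) + (1 - l) with hg
  have key : ∀ ω, Real.exp (b * X ω) ≤ g ω := by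
    intro ω
    have h := convexOn_exp.2 (Set.mem_univ (a * X ω)) (Set.mem_univ (0 : ℝ))
      hlpos.le (by linarith : (0:ℝ) ≤ 1 - l) (by ring : l + (1 - l) = 1)
    simpa [smul_eq_mul, Real.exp_zero, mul_zero, add_zero, ← mul_assoc, hba] using h
  have hgint : Integrable g μ := ((hint a).const_mul l).add (integrable_const _)
  have hgeq : ∫ ω, g ω ∂μ = 1 := by
    rw [hg]
    rw [integral_add ((hint a).const_mul l) (integrable_const _),
      integral_const_mul, integral_const, probReal_univ]
    have : ∫ ω, Real.exp (a * X ω) ∂μ = 1 := hMa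
    rw [this]; simp
  have hMbint : ∫ ω, Real.exp (b * X ω) ∂μ = 1 := hMb
  have hzero : ∫ ω, (g ω - Real.exp (b * X ω)) ∂μ = 0 := by
    rw [integral_sub hgint (hint b), hgeq, hMbint, sub_self]
  have hae : (fun ω => g ω - Real.exp (b * X ω)) =ᵐ[μ] 0 := by
    refine (integral_eq_zero_iff_of_nonneg (fun ω => by simpa using key ω)
      (hgint.sub (hint b))).mp hzero
  have hX0 : X =ᵐ[μ] fun _ => (0 : ℝ) := by
    filter_upwards [hae] with ω hω
    by_contra hx
    have hne : a * X ω ≠ (0 : ℝ) := mul_ne_zero ha0.ne hx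
    have hstrict := strictConvexOn_exp.2 (Set.mem_univ (a * X ω)) (Set.mem_univ (0 : ℝ))
      hne hlpos (by linarith : (0:ℝ) < 1 - l) (by ring : l + (1 - l) = 1)
    have : Real.exp (b * X ω) < g ω := by
      simpa [smul_eq_mul, Real.exp_zero, mul_zero, add_zero, ← mul_assoc, hba] using hstrict
    simp only [Pi.zero_apply] at hω
    linarith
  exact hnd ⟨0, hX0⟩

end Aux2

theorem cgf_exists_unique_neg_zero {Ω : Type*} [MeasurableSpace Ω] (μ : Measure Ω)
    [IsProbabilityMeasure μ] (X : Ω → ℝ) (hX : Measurable X)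
    (hint : ∀ t : ℝ, Integrable (fun ω => Real.exp (t * X ω)) μ)
    (hnd : ¬ ∃ c : ℝ, X =ᵐ[μ] fun _ => c)
    (hmean : 0 < ∫ ω, X ω ∂μ)
    (hlim : Tendsto (fun t => cgf X μ t) atBot atTop) :
    ∃! t₀ : ℝ, t₀ < 0 ∧ cgf X μ t₀ = 0 := by
  set d := ∫ ω, X ω ∂μ with hd
  have hM : ∀ x₀ : ℝ, HasDerivAt (fun t => mgf X μ t) (∫ ω, X ω * Real.exp (x₀ * X ω) ∂μ) x₀ :=
    aux_hasDerivAt_mgf hX hint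
  have hM0 : HasDerivAt (fun t => mgf X μ t) d 0 := by simpa using hM 0
  have hMpos : ∀ t, 0 < mgf X μ t := fun t => mgf_pos (hint t)
  have hMcont : Continuous fun t => mgf X μ t :=
    continuous_iff_continuousAt.mpr fun t => (hM t).continuousAt
  have hcont : Continuous fun t => cgf X μ t :=
    hMcont.log fun t => (hMpos t).ne'
  -- find t < 0 with mgf < 1
  obtain ⟨t, htneg, htlt⟩ : ∃ t : ℝ, t < 0 ∧ mgf X μ t < 1 := by
    have hslope := hasDerivAt_iff_tendsto_slope.mp hM0
    have h2 : Tendsto (slope (fun t => mgf X μ t) 0) (nhdsWithin 0 (Set.Iio 0)) (nhds d) :=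
      hslope.mono_left (nhdsWithin_mono 0 fun x hx => ne_of_lt hx)
    have hev : ∀ᶠ x in nhdsWithin 0 (Set.Iio 0),
        d / 2 < slope (fun t => mgf X μ t) 0 x :=
      h2.eventually (eventually_gt_nhds (by linarith))
    obtain ⟨t, hts, htmem⟩ := (hev.and self_mem_nhdsWithin).exists
    refine ⟨t, htmem, ?_⟩
    have htne : t ≠ 0 := ne_of_lt htmem
    have hs : slope (fun t => mgf X μ t) 0 t = (mgf X μ t - 1) / t := by
      rw [slope_def_field]; simp [mgf_zero]
    rw [hs] at hts
    have : mgf X μ t - 1 = ((mgf X μ t - 1) / t) * t := by field_simp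
    nlinarith [htmem, hts]
  have hcgf_t : cgf X μ t < 0 := Real.log_neg (hMpos t) htlt
  -- find s < t with cgf ≥ 1
  obtain ⟨S, hS⟩ := eventually_atBot.mp (hlim.eventually_ge_atTop 1)
  set s : ℝ := min S (t - 1) with hs
  have hst : s < t := lt_of_le_of_lt (min_le_right _ _) (by linarith)
  have hcgf_s : (1 : ℝ) ≤ cgf X μ s := hS s (min_le_left _ _)
  -- IVT
  obtain ⟨t₀, ht₀mem, ht₀⟩ : ∃ t₀ ∈ Set.Ioo s t, cgf X μ t₀ = 0 := by
    have hsub := intermediate_value_Ioo' hst.le (hcont.continuousOn :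
      ContinuousOn (fun t => cgf X μ t) (Set.Icc s t))
    have h0 : (0 : ℝ) ∈ Set.Ioo (cgf X μ t) (cgf X μ s) := ⟨hcgf_t, by linarith⟩
    obtain ⟨t₀, ht₀mem, ht₀⟩ := hsub h0
    exact ⟨t₀, ht₀mem, ht₀⟩
  have ht₀neg : t₀ < 0 := ht₀mem.2.trans htneg
  have root_mgf : ∀ y : ℝ, cgf X μ y = 0 → mgf X μ y = 1 := by
    intro y hy
    have := Real.exp_log (hMpos y)
    rw [show Real.log (mgf X μ y) = cgf X μ y from rfl, hy, Real.exp_zero] at this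
    exact this.symm
  refine ⟨t₀, ⟨ht₀neg, ht₀⟩, fun y hy => ?_⟩
  rcases lt_trichotomy y t₀ with h | h | h
  · exact (aux_no_two_roots hX hint hnd h ht₀neg
      (root_mgf y hy.2) (root_mgf t₀ ht₀)).elim
  · exact h
  · exact (aux_no_two_roots hX hint hnd h hy.1
      (root_mgf t₀ ht₀) (root_mgf y hy.2)).elim
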